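/- There exists a group homomorphism φ : G₁ → G₁ satisfying φ(x₁) = x₁⁻¹, φ(x₂) = x₂⁻¹, φ(x₃) = x₃⁻¹, φ(x₄) = x₄⁻¹, and φ(u) = x₂⁻¹·u; that is, the substitution xᵢ ↦ xᵢ⁻¹ (i = 1, 2, 3, 4), u ↦ x₂⁻¹u preserves all four defining relations of G₁ and hence defines an endomorphism of G₁. -/
import Mathlib


/-- Relator words for the presentation of `G₁`: generators are indexed by `Fin 5`,
with `0,1,2,3` corresponding to `x₁,x₂,x₃,x₄` and `4` to `u`.  The relations are
`u·xᵢ·u⁻¹ = wᵢ` written as relators `(u·xᵢ·u⁻¹)·wᵢ⁻¹`. -/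
def G1rels : Set (FreeGroup (Fin 5)) :=
  {(FreeGroup.of 4 * FreeGroup.of 0 * (FreeGroup.of 4)⁻¹) *
      (FreeGroup.of 3 * FreeGroup.of 3 * (FreeGroup.of 1)⁻¹)⁻¹,
   (FreeGroup.of 4 * FreeGroup.of 1 * (FreeGroup.of 4)⁻¹) *
      (FreeGroup.of 1 * (FreeGroup.of 3)⁻¹ * FreeGroup.of 1 * FreeGroup.of 2 *
        FreeGroup.of 1 * (FreeGroup.of 3)⁻¹)⁻¹,
   (FreeGroup.of 4 * FreeGroup.of 2 * (FreeGroup.of 4)⁻¹) *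
      (FreeGroup.of 3 * (FreeGroup.of 1)⁻¹)⁻¹,
   (FreeGroup.of 4 * FreeGroup.of 3 * (FreeGroup.of 4)⁻¹) *
      (FreeGroup.of 3 * (FreeGroup.of 0)⁻¹ * FreeGroup.of 3 * (FreeGroup.of 1)⁻¹)⁻¹}

/-- The group `G₁ = ⟨x₁,x₂,x₃,x₄,u ∣ u·x₁·u⁻¹ = x₄·x₄·x₂⁻¹,
`u·x₂·u⁻¹ = x₂·x₄⁻¹·x₂·x₃·x₂·x₄⁻¹`, `u·x₃·u⁻¹ = x₄·x₂⁻¹`,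
`u·x₄·u⁻¹ = x₄·x₁⁻¹·x₄·x₂⁻¹⟩`. -/
abbrev G₁ : Type := PresentedGroup G1rels

def x₁ : G₁ := PresentedGroup.of 0
def x₂ : G₁ := PresentedGroup.of 1
def x₃ : G₁ := PresentedGroup.of 2
def x₄ : G₁ := PresentedGroup.of 3
def u : G₁ := PresentedGroup.of 4

lemma G1_rel_of_mem {r : FreeGroup (Fin 5)} (hr : r ∈ G1rels) :
    (QuotientGroup.mk r : G₁) = 1 := by
  exact (QuotientGroup.eq_one_iff r).mpr (Subgroup.subset_normalClosure hr)

lemma mk_of (i : Fin 5) :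
    (QuotientGroup.mk (FreeGroup.of i) : G₁) = PresentedGroup.of i := rfl

lemma rel1 : u * x₁ * u⁻¹ = x₄ * x₄ * x₂⁻¹ := by
  have h := G1_rel_of_mem (r := (FreeGroup.of 4 * FreeGroup.of 0 * (FreeGroup.of 4)⁻¹) *
      (FreeGroup.of 3 * FreeGroup.of 3 * (FreeGroup.of 1)⁻¹)⁻¹) (by left; rfl)
  simp only [QuotientGroup.mk_mul, QuotientGroup.mk_inv, mk_of] at h
  rw [mul_inv_eq_one] at h
  exact h

lemma rel2 : u * x₂ * u⁻¹ = x₂ * x₄⁻¹ * x₂ * x₃ * x₂ * x₄⁻¹ := by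
  have h := G1_rel_of_mem (r := (FreeGroup.of 4 * FreeGroup.of 1 * (FreeGroup.of 4)⁻¹) *
      (FreeGroup.of 1 * (FreeGroup.of 3)⁻¹ * FreeGroup.of 1 * FreeGroup.of 2 *
        FreeGroup.of 1 * (FreeGroup.of 3)⁻¹)⁻¹) (by right; left; rfl)
  simp only [QuotientGroup.mk_mul, QuotientGroup.mk_inv, mk_of] at h
  rw [mul_inv_eq_one] at h
  exact h

lemma rel3 : u * x₃ * u⁻¹ = x₄ * x₂⁻¹ := by
  have h := G1_rel_of_mem (r := (FreeGroup.of 4 * FreeGroup.of 2 * (FreeGroup.of 4)⁻¹) *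
      (FreeGroup.of 3 * (FreeGroup.of 1)⁻¹)⁻¹) (by right; right; left; rfl)
  simp only [QuotientGroup.mk_mul, QuotientGroup.mk_inv, mk_of] at h
  rw [mul_inv_eq_one] at h
  exact h

lemma rel4 : u * x₄ * u⁻¹ = x₄ * x₁⁻¹ * x₄ * x₂⁻¹ := by
  have h := G1_rel_of_mem (r := (FreeGroup.of 4 * FreeGroup.of 3 * (FreeGroup.of 4)⁻¹) *
      (FreeGroup.of 3 * (FreeGroup.of 0)⁻¹ * FreeGroup.of 3 * (FreeGroup.of 1)⁻¹)⁻¹)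
      (by right; right; right; rfl)
  simp only [QuotientGroup.mk_mul, QuotientGroup.mk_inv, mk_of] at h
  rw [mul_inv_eq_one] at h
  exact h

def fimg : Fin 5 → G₁ := ![x₁⁻¹, x₂⁻¹, x₃⁻¹, x₄⁻¹, x₂⁻¹ * u]

lemma fimg_rels : ∀ r ∈ G1rels, FreeGroup.lift fimg r = 1 := by
  intro r hr
  have c1 := rel1; have c2 := rel2; have c3 := rel3; have c4 := rel4
  rcases hr with h | h | h | h <;> subst h <;>
    simp only [map_mul, map_inv, FreeGroup.lift_apply_of, fimg, Matrix.cons_val_zero,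
      Matrix.cons_val_one, Matrix.head_cons, Matrix.cons_val_fin_one] <;>
    rw [mul_inv_eq_one]
  · -- (x₂⁻¹u) x₁⁻¹ (x₂⁻¹u)⁻¹ = x₄⁻¹x₄⁻¹x₂
    have : u * x₁⁻¹ * u⁻¹ = (x₄ * x₄ * x₂⁻¹)⁻¹ := by
      rw [← c1]; group
    calc x₂⁻¹ * u * x₁⁻¹ * (x₂⁻¹ * u)⁻¹
        = x₂⁻¹ * (u * x₁⁻¹ * u⁻¹) * x₂ := by group
      _ = x₂⁻¹ * (x₄ * x₄ * x₂⁻¹)⁻¹ * x₂ := by rw [this]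
      _ = x₄⁻¹ * x₄⁻¹ * x₂ := by group
  · have : u * x₂⁻¹ * u⁻¹ = (x₂ * x₄⁻¹ * x₂ * x₃ * x₂ * x₄⁻¹)⁻¹ := by
      rw [← c2]; group
    calc x₂⁻¹ * u * x₂⁻¹ * (x₂⁻¹ * u)⁻¹
        = x₂⁻¹ * (u * x₂⁻¹ * u⁻¹) * x₂ := by group
      _ = x₂⁻¹ * (x₂ * x₄⁻¹ * x₂ * x₃ * x₂ * x₄⁻¹)⁻¹ * x₂ := by rw [this]
      _ = x₂⁻¹ * x₄ * x₂⁻¹ * x₃⁻¹ * x₂⁻¹ * x₄ := by group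
  · have : u * x₃⁻¹ * u⁻¹ = (x₄ * x₂⁻¹)⁻¹ := by
      rw [← c3]; group
    calc x₂⁻¹ * u * x₃⁻¹ * (x₂⁻¹ * u)⁻¹
        = x₂⁻¹ * (u * x₃⁻¹ * u⁻¹) * x₂ := by group
      _ = x₂⁻¹ * (x₄ * x₂⁻¹)⁻¹ * x₂ := by rw [this]
      _ = x₄⁻¹ * x₂ := by group
  · have : u * x₄⁻¹ * u⁻¹ = (x₄ * x₁⁻¹ * x₄ * x₂⁻¹)⁻¹ := by
      rw [← c4]; group
    calc x₂⁻¹ * u * x₄⁻¹ * (x₂⁻¹ * u)⁻¹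
        = x₂⁻¹ * (u * x₄⁻¹ * u⁻¹) * x₂ := by group
      _ = x₂⁻¹ * (x₄ * x₁⁻¹ * x₄ * x₂⁻¹)⁻¹ * x₂ := by rw [this]
      _ = x₄⁻¹ * x₁ * x₄⁻¹ * x₂ := by group

/-- There exists an endomorphism of `G₁` sending `xᵢ ↦ xᵢ⁻¹` and `u ↦ x₂⁻¹·u`. -/
theorem G1_exists_hom :
    ∃ φ : G₁ →* G₁,
      φ x₁ = x₁⁻¹ ∧ φ x₂ = x₂⁻¹ ∧ φ x₃ = x₃⁻¹ ∧ φ x₄ = x₄⁻¹ ∧ φ u = x₂⁻¹ * u := by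
  refine ⟨PresentedGroup.toGroup fimg_rels, ?_, ?_, ?_, ?_, ?_⟩ <;>
    exact PresentedGroup.toGroup.of fimg_rels
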